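/- Assume the separation hypothesis. Let λ = λ^{[a]}_{(i₁,l₁),(i₂,l₂)} ∈ P_n be an irreducible multipartition (i.e., i₁ ≠ i₂). If μ ∈ P_n, u is a standard tableau of shape λ, t is a standard tableau of shape μ, and res(t) = res(u), then μ = λ. -/
import Mathlib


/-- The total order on boxes `(i,l)`: `(i,l) ≤ (i',l')` iff `l < l'`, or `l = l'`
and `i ≤ i'`. -/
def bLE {p d : ℕ} (b b' : Fin p × Fin d) : Prop :=
  b.2 < b'.2 ∨ (b.2 = b'.2 ∧ b.1 ≤ b'.1)

/-- The strict version of the total order on boxes. -/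
def bLT {p d : ℕ} (b b' : Fin p × Fin d) : Prop :=
  b.2 < b'.2 ∨ (b.2 = b'.2 ∧ b.1 < b'.1)

/-- The partial order `≤'` on boxes: `(i,l) ≤' (i',l')` iff `l < l'` or
`(i,l) = (i',l')`. -/
def bLE' {p d : ℕ} (b b' : Fin p × Fin d) : Prop :=
  b.2 < b'.2 ∨ b = b'

/-- A 3D multipartition of `n` with at most two nonempty components: either a
single column of `n` nodes on a box, or two columns of sizes `c₁ ≥ 1` and
`n - c₁ ≥ 1` on boxes `b₁ < b₂` (in the total order). -/
inductive MP (p d n : ℕ) : Type where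
  | single (b : Fin p × Fin d) : MP p d n
  | double (b₁ b₂ : Fin p × Fin d) (c₁ : ℕ)
      (hlt : bLT b₁ b₂) (hc1 : 1 ≤ c₁) (hc2 : c₁ < n) : MP p d n

/-- The dominance-type relation on multipartitions associated to a relation `rB`
on boxes; with `rB = bLE` this is `⊴` and with `rB = bLE'` this is `⊴'`.
For doubles, `a = c₁ - c₂ = 2c₁ - n`. -/
def dom {p d n : ℕ} (rB : (Fin p × Fin d) → (Fin p × Fin d) → Prop) :
    MP p d n → MP p d n → Prop
  | .single b₁, .single b₂ => rB b₁ b₂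
  | .single _, .double _ _ _ _ _ _ => False
  | .double b₁ _ _ _ _ _, .single b₃ => rB b₁ b₃
  | .double b₁ b₂ c _ _ _, .double b₃ b₄ c' _ _ _ =>
      rB b₁ b₃ ∧ rB b₂ b₄ ∧
      (|2 * (c : ℤ) - n| < |2 * (c' : ℤ) - n| ∨
       (|2 * (c : ℤ) - n| = |2 * (c' : ℤ) - n| ∧ 2 * (c : ℤ) - n ≥ 2 * (c' : ℤ) - n) ∨
       (|2 * (c : ℤ) - n| = |2 * (c' : ℤ) - n| ∧ 2 * (c : ℤ) - n < 2 * (c' : ℤ) - n ∧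
        rB b₂ b₃))

/-- A node: a (1-based) row index together with a box. -/
abbrev Nd (p d : ℕ) : Type := ℕ × (Fin p × Fin d)

/-- The set of nodes of a multipartition. -/
def nodes {p d n : ℕ} : MP p d n → Set (Nd p d)
  | .single b => {x | x.2 = b ∧ 1 ≤ x.1 ∧ x.1 ≤ n}
  | .double b₁ b₂ c₁ _ _ _ =>
      {x | (x.2 = b₁ ∧ 1 ≤ x.1 ∧ x.1 ≤ c₁) ∨ (x.2 = b₂ ∧ 1 ≤ x.1 ∧ x.1 ≤ n - c₁)}

/-- A tableau of shape `l`: a bijection from `{1, …, n}` (modelled as `Fin n`,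
with `m : Fin n` representing the entry `m + 1`) onto the nodes of `l`. -/
def IsTab {p d n : ℕ} (l : MP p d n) (t : Fin n → Nd p d) : Prop :=
  Function.Injective t ∧ Set.range t = nodes l

/-- A standard tableau: a tableau in which, within each column, the entries
increase with the row index. -/
def IsStd {p d n : ℕ} (l : MP p d n) (t : Fin n → Nd p d) : Prop :=
  IsTab l t ∧
  ∀ m m' : Fin n, (t m).2 = (t m').2 → (t m).1 < (t m').1 → m < m'

/-- The residue of a node: the node in row `a` on box `(i,l)` has residue
`(i, j_l + 1 − a) ∈ ℤ/pℤ × ℤ/eℤ`. -/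
def resNd {p d : ℕ} (e : ℕ) (j : Fin d → ZMod e) (x : Nd p d) : ZMod p × ZMod e :=
  ((x.2.1 : ZMod p), j x.2.2 + 1 - (x.1 : ZMod e))

/-- The separation hypothesis: the `2r` elements `(i, j_l)` and `(i, j_l − 1)`,
for `(i,l) ∈ 𝒦`, are pairwise distinct. -/
def SepHyp (p d e : ℕ) (j : Fin d → ZMod e) : Prop :=
  Function.Injective (fun x : (Fin p × Fin d) × Bool =>
    (((x.1.1 : ZMod p), j x.1.2 - (if x.2 then 1 else 0)) : ZMod p × ZMod e))

/-- The total order on nodes: `(a,(i,l)) < (a',(i',l'))` iff `a < a'`, or `a = a'`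
and `l < l'`, or `a = a'`, `l = l'` and `i < i'`. -/
def ndLT {p d : ℕ} (x y : Nd p d) : Prop :=
  x.1 < y.1 ∨ (x.1 = y.1 ∧ (x.2.2 < y.2.2 ∨ (x.2.2 = y.2.2 ∧ x.2.1 < y.2.1)))


lemma finCast_inj {p : ℕ} {i i' : Fin p} (h : ((i : ℕ) : ZMod p) = ((i' : ℕ) : ZMod p)) :
    i = i' := by
  haveI : NeZero p := ⟨i.pos.ne'⟩
  have := congrArg ZMod.val h
  rwa [ZMod.val_cast_of_lt i.isLt, ZMod.val_cast_of_lt i'.isLt, ← Fin.ext_iff] at this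

lemma sep_box_eq {p d e : ℕ} {j : Fin d → ZMod e} (hsep : SepHyp p d e j)
    {b b' : Fin p × Fin d} (h1 : ((b.1 : ℕ) : ZMod p) = ((b'.1 : ℕ) : ZMod p))
    (h2 : j b.2 = j b'.2) : b = b' := by
  have h := hsep (a₁ := (b, false)) (a₂ := (b', false)) (by
    simp only [if_neg Bool.false_ne_true, Bool.false_eq_true, if_false, sub_zero]
    exact Prod.ext h1 h2)
  exact congrArg Prod.fst h

lemma bLT_asymm {p d : ℕ} {x y : Fin p × Fin d} (h : bLT x y) (h' : bLT y x) : False := by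
  simp only [bLT, Fin.lt_def, Fin.ext_iff] at h h'
  omega

lemma min_col {p d n : ℕ} {μ : MP p d n} {t : Fin n → Nd p d} (ht : IsStd μ t)
    {b : Fin p × Fin d} {a₀ : Fin n} (h0 : t a₀ = ((1 : ℕ), b)) :
    ∀ a : Fin n, (t a).2 = b → a₀ ≤ a := by
  intro a ha
  have hmem : t a ∈ nodes μ := by rw [← ht.1.2]; exact Set.mem_range_self a
  have h1 : 1 ≤ (t a).1 := by
    cases μ with
    | single b' => exact hmem.2.1
    | double b₁ b₂ c _ _ _ =>
      rcases hmem with ⟨_, h, _⟩ | ⟨_, h, _⟩ <;> exact h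
  rcases eq_or_lt_of_le h1 with h | h
  · have heq : t a = ((1 : ℕ), b) := Prod.ext h.symm ha
    exact (ht.1.1 (heq.trans h0.symm)).ge
  · exact le_of_lt (ht.2 a₀ a (by rw [h0, ha]) (by rw [h0]; exact h))

lemma card_col {p d n : ℕ} {μ : MP p d n} {t : Fin n → Nd p d} (ht : IsTab μ t)
    {b : Fin p × Fin d} {c : ℕ}
    (h1 : ∀ x : Nd p d, x ∈ nodes μ → x.2 = b → 1 ≤ x.1 ∧ x.1 ≤ c)
    (h2 : ∀ k : ℕ, 1 ≤ k → k ≤ c → ((k, b) : Nd p d) ∈ nodes μ) :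
    (Finset.univ.filter fun a => (t a).2 = b).card = c := by
  classical
  have key : (Finset.univ.filter fun a => (t a).2 = b).image (fun a => (t a).1)
      = Finset.Icc 1 c := by
    ext k
    simp only [Finset.mem_image, Finset.mem_filter, Finset.mem_univ, true_and,
      Finset.mem_Icc]
    constructor
    · rintro ⟨a, hab, rfl⟩
      exact h1 (t a) (by rw [← ht.2]; exact Set.mem_range_self a) hab
    · rintro ⟨hk1, hk2⟩
      have hmem : ((k, b) : Nd p d) ∈ Set.range t := by rw [ht.2]; exact h2 k hk1 hk2
      obtain ⟨a, ha⟩ := hmem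
      exact ⟨a, by rw [ha], by rw [ha]⟩
  have hinj : Set.InjOn (fun a => (t a).1)
      (Finset.univ.filter fun a => (t a).2 = b) := by
    intro a ha a' ha' hk
    simp only [Finset.coe_filter, Set.mem_setOf_eq, Finset.mem_univ, true_and] at ha ha'
    exact ht.1 (Prod.ext hk (ha.trans ha'.symm))
  calc (Finset.univ.filter fun a => (t a).2 = b).card
      = ((Finset.univ.filter fun a => (t a).2 = b).image (fun a => (t a).1)).card :=
        (Finset.card_image_of_injOn hinj).symm
    _ = c := by rw [key, Nat.card_Icc]; omega

lemma key_col {p d n e : ℕ} {j : Fin d → ZMod e} (hsep : SepHyp p d e j)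
    {μ ν : MP p d n} {u t : Fin n → Nd p d}
    (hu : IsStd μ u) (ht : IsStd ν t)
    (hres : ∀ a : Fin n, resNd e j (t a) = resNd e j (u a))
    {β γ : Fin p × Fin d} {a₀ a₀' : Fin n}
    (hu0 : u a₀ = ((1 : ℕ), β)) (ht0 : t a₀' = ((1 : ℕ), γ))
    (hC : ∀ a, (u a).2 = β ↔ (t a).2 = γ) : γ = β := by
  have h1 : a₀' ≤ a₀ := min_col ht ht0 a₀ ((hC a₀).1 (by rw [hu0]))
  have h2 : a₀ ≤ a₀' := min_col hu hu0 a₀' ((hC a₀').2 (by rw [ht0]))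
  have heq : a₀ = a₀' := le_antisymm h2 h1
  have hr := hres a₀
  have ht0' : t a₀ = ((1 : ℕ), γ) := by rw [heq]; exact ht0
  rw [ht0', hu0] at hr
  have hfst : ((γ.1 : ℕ) : ZMod p) = ((β.1 : ℕ) : ZMod p) := congrArg Prod.fst hr
  have hsnd : j γ.2 = j β.2 := by
    have h := congrArg Prod.snd hr
    simpa [resNd] using h
  exact sep_box_eq hsep hfst hsnd

/-- under the separation hypothesis, if `λ` is an irreducible
double shape (`i₁ ≠ i₂`), `u` is a standard tableau of shape `λ`, `t` is a
standard tableau of shape `μ`, and `res(t) = res(u)`, then `μ = λ`. -/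
theorem shape_eq_of_res_eq_irreducible (p d n : ℕ) (hp : 1 ≤ p) (hd : 1 ≤ d)
    (hn : 1 ≤ n) (e : ℕ) (j : Fin d → ZMod e) (hsep : SepHyp p d e j)
    (b₁ b₂ : Fin p × Fin d) (c₁ : ℕ) (hlt : bLT b₁ b₂) (hc1 : 1 ≤ c₁) (hc2 : c₁ < n)
    (hirr : b₁.1 ≠ b₂.1)
    (m : MP p d n) (u t : Fin n → Nd p d)
    (hu : IsStd (MP.double b₁ b₂ c₁ hlt hc1 hc2) u) (ht : IsStd m t)
    (hres : ∀ a : Fin n, resNd e j (t a) = resNd e j (u a)) :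
    m = MP.double b₁ b₂ c₁ hlt hc1 hc2 := by
  classical
  have hb12 : b₁ ≠ b₂ := fun h => hirr (congrArg Prod.fst h)
  have humem : ∀ a, u a ∈ nodes (MP.double b₁ b₂ c₁ hlt hc1 hc2) := fun a => by
    rw [← hu.1.2]; exact Set.mem_range_self a
  have hubox : ∀ a, (u a).2 = b₁ ∨ (u a).2 = b₂ := fun a => by
    rcases humem a with ⟨h, _⟩ | ⟨h, _⟩
    · exact Or.inl h
    · exact Or.inr h
  have htmem : ∀ a, t a ∈ nodes m := fun a => by
    rw [← ht.1.2]; exact Set.mem_range_self a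
  have hI : ∀ a, (t a).2.1 = (u a).2.1 := fun a =>
    finCast_inj (congrArg Prod.fst (hres a))
  -- the entries at the top of the two columns of u
  have ha1' : ((1 : ℕ), b₁) ∈ Set.range u := by
    rw [hu.1.2]; exact Or.inl ⟨rfl, le_refl 1, hc1⟩
  obtain ⟨a₁, ha₁⟩ := ha1'
  have ha2' : ((1 : ℕ), b₂) ∈ Set.range u := by
    rw [hu.1.2]; exact Or.inr ⟨rfl, le_refl 1, by omega⟩
  obtain ⟨a₂, ha₂⟩ := ha2'
  have hta₁ : (t a₁).2.1 = b₁.1 := by rw [hI a₁, ha₁]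
  have hta₂ : (t a₂).2.1 = b₂.1 := by rw [hI a₂, ha₂]
  cases m with
  | single b =>
    exfalso
    have e1 : (t a₁).2 = b := (htmem a₁).1
    have e2 : (t a₂).2 = b := (htmem a₂).1
    exact hirr ((e1 ▸ hta₁ : b.1 = b₁.1).symm.trans (e2 ▸ hta₂ : b.1 = b₂.1))
  | double b₃ b₄ c' hlt' hc1' hc2' =>
    have htbox : ∀ a, (t a).2 = b₃ ∨ (t a).2 = b₄ := fun a => by
      rcases htmem a with ⟨h, _⟩ | ⟨h, _⟩
      · exact Or.inl h
      · exact Or.inr h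
    have ha3' : ((1 : ℕ), b₃) ∈ Set.range t := by
      rw [ht.1.2]; exact Or.inl ⟨rfl, le_refl 1, hc1'⟩
    obtain ⟨a₃, ha₃⟩ := ha3'
    have ha4' : ((1 : ℕ), b₄) ∈ Set.range t := by
      rw [ht.1.2]; exact Or.inr ⟨rfl, le_refl 1, by omega⟩
    obtain ⟨a₄, ha₄⟩ := ha4'
    have hne34 : b₃.1 ≠ b₄.1 := by
      intro h
      have k1 : b₃.1 = b₁.1 := by
        rcases htbox a₁ with h' | h'
        · rw [← h', hta₁]
        · rw [h, ← h', hta₁]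
      have k2 : b₃.1 = b₂.1 := by
        rcases htbox a₂ with h' | h'
        · rw [← h', hta₂]
        · rw [h, ← h', hta₂]
      exact hirr (k1.symm.trans k2)
    have boxeq : ∀ x y : Fin p × Fin d, (x = b₃ ∨ x = b₄) → (y = b₃ ∨ y = b₄) →
        x.1 = y.1 → x = y := by
      rintro x y (rfl | rfl) (rfl | rfl) h
      · rfl
      · exact absurd h hne34
      · exact absurd h.symm hne34
      · rfl
    have hC1 : ∀ a, (u a).2 = b₁ ↔ (t a).2 = (t a₁).2 := by
      intro a
      constructor
      · intro h
        exact boxeq _ _ (htbox a) (htbox a₁)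
          (by rw [hI a, h, ← hta₁])
      · intro h
        have hh : (u a).2.1 = b₁.1 := by rw [← hI a, h, hta₁]
        rcases hubox a with h' | h'
        · exact h'
        · exact absurd (h' ▸ hh : b₂.1 = b₁.1).symm hirr
    have hC2 : ∀ a, (u a).2 = b₂ ↔ (t a).2 = (t a₂).2 := by
      intro a
      constructor
      · intro h
        exact boxeq _ _ (htbox a) (htbox a₂)
          (by rw [hI a, h, ← hta₂])
      · intro h
        have hh : (u a).2.1 = b₂.1 := by rw [← hI a, h, hta₂]
        rcases hubox a with h' | h'
        · exact absurd (h' ▸ hh : b₁.1 = b₂.1) hirr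
        · exact h'
    obtain ⟨astar, hastar⟩ : ∃ a, t a = ((1 : ℕ), (t a₁).2) := by
      rcases htbox a₁ with h | h
      · exact ⟨a₃, by rw [h]; exact ha₃⟩
      · exact ⟨a₄, by rw [h]; exact ha₄⟩
    have hb1 : (t a₁).2 = b₁ := key_col hsep hu ht hres ha₁ hastar hC1
    obtain ⟨astar2, hastar2⟩ : ∃ a, t a = ((1 : ℕ), (t a₂).2) := by
      rcases htbox a₂ with h | h
      · exact ⟨a₃, by rw [h]; exact ha₃⟩
      · exact ⟨a₄, by rw [h]; exact ha₄⟩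
    have hb2 : (t a₂).2 = b₂ := key_col hsep hu ht hres ha₂ hastar2 hC2
    have e34 : b₃ = b₁ ∧ b₄ = b₂ := by
      rcases htbox a₁ with h | h
      · have e3 : b₃ = b₁ := h ▸ hb1
        rcases htbox a₂ with h' | h'
        · exact absurd (e3.symm.trans (h' ▸ hb2 : b₃ = b₂)) hb12
        · exact ⟨e3, h' ▸ hb2⟩
      · have e4 : b₄ = b₁ := h ▸ hb1
        rcases htbox a₂ with h' | h'
        · have e3 : b₃ = b₂ := h' ▸ hb2
          exact absurd hlt' (fun hh => bLT_asymm hlt (e3 ▸ e4 ▸ hh))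
        · exact absurd (e4.symm.trans (h' ▸ hb2 : b₄ = b₂)) hb12
    obtain ⟨e3, e4⟩ := e34
    have hb34 : b₃ ≠ b₄ := fun q => hne34 (congrArg Prod.fst q)
    -- now count the first column
    have hcu : (Finset.univ.filter fun a => (u a).2 = b₁).card = c₁ := by
      apply card_col hu.1
      · intro x hx hxb
        rcases hx with ⟨_, hh⟩ | ⟨h, hh⟩
        · exact hh
        · exact absurd (hxb ▸ h : b₁ = b₂) hb12
      · intro k hk1 hk2
        exact Or.inl ⟨rfl, hk1, hk2⟩
    have hct : (Finset.univ.filter fun a => (t a).2 = b₃).card = c' := by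
      apply card_col ht.1
      · intro x hx hxb
        rcases hx with ⟨_, hh⟩ | ⟨h, hh⟩
        · exact hh
        · exact absurd (hxb ▸ h : b₃ = b₄) hb34
      · intro k hk1 hk2
        exact Or.inl ⟨rfl, hk1, hk2⟩
    have hta13 : (t a₁).2 = b₃ := hb1.trans e3.symm
    have hfe : (Finset.univ.filter fun a => (t a).2 = b₃)
        = (Finset.univ.filter fun a => (u a).2 = b₁) := by
      ext a
      simp only [Finset.mem_filter, Finset.mem_univ, true_and]
      constructor
      · intro h
        exact (hC1 a).2 (h.trans hta13.symm)
      · intro h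
        exact ((hC1 a).1 h).trans hta13
    have hcc : c' = c₁ := by rw [← hct, hfe, hcu]
    subst hcc
    subst e3
    subst e4
    rfl
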